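/- arXiv:2103.05938 — 9 statements merged into one kernel-verified Lean document; each statement's English description precedes it below -/
import Mathlib

section
/- Let Γ be a group and φ: Γ → Γ an injective endomorphism whose image φ(Γ) has finite index in Γ. Then the intersection ⋂_{n>0} φⁿ(Γ) is finite if and only if every subgroup H ≤ Γ with φ(H) = H is finite. -/
theorem stmt0 {Γ : Type*} [Group Γ] (φ : Monoid.End Γ)
    (hinj : Function.Injective φ) (hfi : (MonoidHom.range (φ : Γ →* Γ)).FiniteIndex) :
    Finite ↥(⨅ n : ℕ, MonoidHom.range ((φ ^ (n + 1) : Monoid.End Γ) : Γ →* Γ)) ↔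
      ∀ H : Subgroup Γ, H.map (φ : Γ →* Γ) = H → Finite ↥H := by
  have happ : ∀ (n : ℕ) (x : Γ), ((φ ^ (n + 1) : Monoid.End Γ) : Γ →* Γ) x
      = φ (((φ ^ n : Monoid.End Γ) : Γ →* Γ) x) := by
    intro n x
    rw [pow_succ']
    rfl
  have comm : ∀ (k : ℕ) (y : Γ), ((φ ^ (k + 1) : Monoid.End Γ) : Γ →* Γ) y
      = ((φ ^ k : Monoid.End Γ) : Γ →* Γ) (φ y) := by
    intro k
    induction k with
    | zero => intro y; rw [happ]; rfl
    | succ j ih => intro y; rw [happ, ih y, happ]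
  constructor
  · intro hfin H hH
    have hle : H ≤ ⨅ n : ℕ, MonoidHom.range ((φ ^ (n + 1) : Monoid.End Γ) : Γ →* Γ) := by
      have key : ∀ n : ℕ, H.map ((φ ^ (n + 1) : Monoid.End Γ) : Γ →* Γ) = H := by
        intro n
        induction n with
        | zero => simpa using hH
        | succ m ih =>
          have heq : ((φ ^ (m + 2) : Monoid.End Γ) : Γ →* Γ)
              = ((φ ^ (m + 1) : Monoid.End Γ) : Γ →* Γ).comp (φ : Γ →* Γ) :=
            MonoidHom.ext fun x => comm (m + 1) x
          rw [heq]
          exact (Subgroup.map_map H _ _).symm.trans ((congrArg (Subgroup.map _) hH).trans ih)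
      intro x hx
      rw [Subgroup.mem_iInf]
      intro n
      have hx' := hx
      rw [← key n] at hx'
      obtain ⟨y, -, hy⟩ := hx'
      exact ⟨y, hy⟩
    exact Finite.of_injective _ (Subgroup.inclusion_injective hle)
  · intro h
    apply h
    apply le_antisymm
    · rintro x ⟨z, hz, rfl⟩
      simp only [SetLike.mem_coe, Subgroup.mem_iInf] at hz
      rw [Subgroup.mem_iInf]
      intro n
      match n with
      | 0 => exact ⟨z, by simp⟩
      | (m + 1) =>
        obtain ⟨w, hw⟩ := hz m
        exact ⟨w, (happ (m + 1) w).trans (congrArg (fun y => φ y) hw)⟩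
    · intro x hx
      rw [Subgroup.mem_iInf] at hx
      obtain ⟨z, hz⟩ := hx 0
      have hz' : φ z = x := (happ 0 z).symm.trans hz
      refine ⟨z, ?_, hz'⟩
      simp only [SetLike.mem_coe, Subgroup.mem_iInf]
      intro n
      obtain ⟨w, hw⟩ := hx (n + 1)
      refine ⟨w, hinj ?_⟩
      exact (happ (n + 1) w).symm.trans (hw.trans hz'.symm)
end

section
/- Let Γ be a group and φ: Γ → Γ an injective endomorphism. Then the subgroup H₀ = ⋂_{n>0} φⁿ(Γ) satisfies φ(H₀) = H₀. -/
theorem stmt1 {Γ : Type*} [Group Γ] (φ : Monoid.End Γ)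
    (hinj : Function.Injective φ) :
    (⨅ n : ℕ, MonoidHom.range ((φ ^ (n + 1) : Monoid.End Γ) : Γ →* Γ)).map (φ : Γ →* Γ) =
      ⨅ n : ℕ, MonoidHom.range ((φ ^ (n + 1) : Monoid.End Γ) : Γ →* Γ) := by
  have happ : ∀ a c : ℕ, ∀ y : Γ, (φ ^ (a + c)) y = (φ ^ a) ((φ ^ c) y) := by
    intro a c y
    rw [pow_add]
    rfl
  have hmap : ∀ n : ℕ, (MonoidHom.range ((φ ^ (n + 1) : Monoid.End Γ) : Γ →* Γ)).map (φ : Γ →* Γ)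
      = MonoidHom.range ((φ ^ (n + 2) : Monoid.End Γ) : Γ →* Γ) := by
    intro n
    refine (MonoidHom.range_comp _ _).symm.trans ?_
    congr 1
    ext x
    show φ ((φ ^ (n + 1)) x) = (φ ^ (n + 2)) x
    rw [show n + 2 = 1 + (n + 1) by omega, happ 1 (n + 1)]
    rfl
  have hle : ∀ a c : ℕ, MonoidHom.range ((φ ^ (a + c) : Monoid.End Γ) : Γ →* Γ)
      ≤ MonoidHom.range ((φ ^ a : Monoid.End Γ) : Γ →* Γ) := by
    rintro a c x ⟨y, hy⟩
    exact ⟨(φ ^ c) y, (happ a c y).symm.trans hy⟩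
  rw [Subgroup.map_iInf _ hinj]
  simp_rw [hmap]
  apply le_antisymm
  · exact le_iInf fun n => le_trans (iInf_le _ n) (by simpa using hle (n + 1) 1)
  · exact le_iInf fun n => iInf_le _ (n + 1)
end

section
/- Let Γ be a group in which every subgroup is finitely generated, φ: Γ → Γ a monomorphism with image of finite index, and Γ' ≤ Γ a finite index φ-invariant subgroup such that the restriction of φ to Γ' is strongly scale-invariant. Then φ is strongly scale-invariant. -/
open Subgroup

/-- A finitely generated group has finitely many homomorphisms into a finite monoid. -/
lemma aux_finite_monoidHom {G M : Type*} [Group G] [Monoid M] [Finite M]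
    (hfg : Group.FG G) : Finite (G →* M) := by
  obtain ⟨S, hS, hSfin⟩ := Group.fg_iff.mp (hfg)
  have : Finite S := hSfin
  have hinj : Function.Injective (fun f : G →* M => (fun s : S => f s)) := by
    intro f g h
    refine MonoidHom.eq_of_eqOn_dense hS ?_
    intro x hx
    exact congrFun h ⟨x, hx⟩
  exact Finite.of_injective _ hinj

/-- A finitely generated group has finitely many subgroups of a given (nonzero) index. -/
lemma aux_finite_subgroups {G : Type*} [Group G] (hfg : Group.FG G)
    {n : ℕ} (hn : n ≠ 0) : Finite {K : Subgroup G // K.index = n} := by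
  have hfin : Finite (G →* Equiv.Perm (Fin n)) := aux_finite_monoidHom hfg
  have key : ∀ K : {K : Subgroup G // K.index = n},
      ∃ fp : (G →* Equiv.Perm (Fin n)) × Fin n,
        ∀ g : G, g ∈ K.1 ↔ fp.1 g fp.2 = fp.2 := by
    rintro ⟨K, hK⟩
    haveI : K.FiniteIndex := ⟨by rw [hK]; exact hn⟩
    haveI : Finite (G ⧸ K) := Subgroup.finite_quotient_of_finiteIndex
    have e : (G ⧸ K) ≃ Fin n := Finite.equivFinOfCardEq (by rw [← K.index_eq_card, hK])
    let f : G →* Equiv.Perm (Fin n) := MonoidHom.mk'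
      (fun g => e.permCongr (MulAction.toPermHom G (G ⧸ K) g))
      (by
        intro a b
        ext x
        simp [Equiv.permCongr_apply, mul_smul])
    refine ⟨(f, e ((1 : G) : G ⧸ K)), fun g => ?_⟩
    have h1 : f g (e ((1 : G) : G ⧸ K)) = e (g • ((1 : G) : G ⧸ K)) := by
      simp [f, Equiv.permCongr_apply]
    have h2 : g • ((1 : G) : G ⧸ K) = ((g : G) : G ⧸ K) := by
      have := MulAction.Quotient.smul_mk K g 1
      rw [this, smul_eq_mul, mul_one]
    rw [h1, h2]
    rw [e.apply_eq_iff_eq, QuotientGroup.eq]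
    simp
  choose Φ hΦ using key
  have hinjΦ : Function.Injective Φ := by
    intro K1 K2 hEq
    apply Subtype.ext
    ext g
    rw [hΦ K1 g, hΦ K2 g, hEq]
  exact Finite.of_injective Φ hinjΦ

def StronglyScaleInvariant {Γ : Type*} [Group Γ] (φ : Monoid.End Γ) : Prop :=
  Function.Injective φ ∧ (MonoidHom.range (φ : Γ →* Γ)).FiniteIndex ∧
    Finite ↥(⨅ n : ℕ, MonoidHom.range ((φ ^ (n + 1) : Monoid.End Γ) : Γ →* Γ))

theorem stmt7 {Γ : Type*} [Group Γ] (hfg : ∀ H : Subgroup Γ, H.FG)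
    (φ : Monoid.End Γ)
    (hinj : Function.Injective φ) (hfi : (MonoidHom.range (φ : Γ →* Γ)).FiniteIndex)
    (Γ' : Subgroup Γ) (hfiΓ' : Γ'.FiniteIndex) (hinv : ∀ x ∈ Γ', φ x ∈ Γ')
    (ψ : Monoid.End ↥Γ') (hres : ∀ x : ↥Γ', (ψ x : Γ) = φ (x : Γ))
    (h : StronglyScaleInvariant ψ) :
    StronglyScaleInvariant φ := by
  refine ⟨hinj, hfi, ?_⟩
  set H : Subgroup Γ := ⨅ n : ℕ, MonoidHom.range ((φ ^ (n + 1) : Monoid.End Γ) : Γ →* Γ)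
    with hHdef
  -- pow application lemmas
  have hpow_succ' : ∀ (n : ℕ) (x : Γ), ((φ ^ (n + 1) : Monoid.End Γ) : Γ →* Γ) x
      = φ (((φ ^ n : Monoid.End Γ) : Γ →* Γ) x) := by
    intro n x
    rw [pow_succ']
    rfl
  have hpow_succ : ∀ (n : ℕ) (x : Γ), ((φ ^ (n + 1) : Monoid.End Γ) : Γ →* Γ) x
      = ((φ ^ n : Monoid.End Γ) : Γ →* Γ) (φ x) := by
    intro n x
    rw [pow_succ]
    rfl
  -- Step 1 : φ(H) = H
  have hmap : Subgroup.map (φ : Γ →* Γ) H = H := by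
    apply le_antisymm
    · rintro x ⟨y, hy, rfl⟩
      rw [SetLike.mem_coe, hHdef, Subgroup.mem_iInf] at hy
      rw [Subgroup.mem_iInf]
      intro n
      match n with
      | 0 => exact ⟨y, by rw [pow_one]⟩
      | m + 1 =>
        obtain ⟨z, hz⟩ := hy m
        exact ⟨z, (hpow_succ' (m+1) z).trans (congrArg φ hz)⟩
    · intro x hx
      rw [hHdef, Subgroup.mem_iInf] at hx
      obtain ⟨y, hy⟩ := hx 0
      have hy1 : φ y = x := by rw [← hy, pow_one]; rfl
      refine ⟨y, ?_, hy1⟩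
      rw [SetLike.mem_coe, Subgroup.mem_iInf]
      intro n
      obtain ⟨z, hz⟩ := hx (n + 1)
      refine ⟨z, ?_⟩
      apply hinj
      exact (hpow_succ' (n + 1) z).symm.trans (hz.trans hy1.symm)
  -- Step 2 : the automorphism of H induced by φ
  let β : MulAut ↥H :=
    (Subgroup.equivMapOfInjective H (φ : Γ →* Γ) hinj).trans (MulEquiv.subgroupCongr hmap)
  have hβ : ∀ x : ↥H, ((β x : ↥H) : Γ) = φ (x : Γ) := fun x => rfl
  have hβpow : ∀ (n : ℕ) (x : ↥H),
      (((β ^ n) x : ↥H) : Γ) = ((φ ^ n : Monoid.End Γ) : Γ →* Γ) (x : Γ) := by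
    intro n
    induction n with
    | zero => intro x; rfl
    | succ m ih =>
      intro x
      rw [pow_succ, MulAut.mul_apply, ih (β x), hβ x, ← hpow_succ]
  -- Step 3 : K = Γ' ∩ H, finite index in H
  let K : Subgroup ↥H := Γ'.subgroupOf H
  haveI := hfiΓ'
  haveI hKfi : K.FiniteIndex := Subgroup.instFiniteIndex_subgroupOf Γ' H
  set m := K.index with hm
  have hm0 : m ≠ 0 := hKfi.index_ne_zero
  -- Step 4 : the images of K under powers of β
  let S : ℕ → Subgroup ↥H := fun n => Subgroup.map ((β ^ n) : ↥H ≃* ↥H).toMonoidHom K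
  have hSindex : ∀ n, (S n).index = m := by
    intro n
    rw [hm]
    exact Subgroup.index_map_eq K ((β ^ n) : ↥H ≃* ↥H).surjective
      (le_of_eq_of_le ((MonoidHom.ker_eq_bot_iff _).mpr ((β ^ n) : ↥H ≃* ↥H).injective) bot_le)
  -- Step 5 : L = ⋂ₙ S n has finite index in H
  have hFGH : Group.FG ↥H := (Group.fg_iff_subgroup_fg H).mpr (hfg H)
  have hfinsub : Finite {K' : Subgroup ↥H // K'.index = m} := aux_finite_subgroups hFGH hm0
  set L : Subgroup ↥H := ⨅ n, S n with hLdef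
  have hrangefin : Finite ↥(Set.range S) := by
    refine Finite.of_injective
      (fun x : Set.range S => (⟨x.1, ?_⟩ : {K' : Subgroup ↥H // K'.index = m})) ?_
    · obtain ⟨n, hn⟩ := x.2
      rw [← hn]
      exact hSindex n
    · intro a b hab
      simp only [Subtype.mk.injEq] at hab
      exact Subtype.ext hab
  haveI hLfi : L.FiniteIndex := by
    have hL2 : L = ⨅ a : Set.range S, (a : Subgroup ↥H) := by
      rw [hLdef, ← sInf_range, sInf_eq_iInf']
    rw [hL2]
    exact Subgroup.finiteIndex_iInf fun a => by
      obtain ⟨n, hn⟩ := a.2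
      exact ⟨by rw [← hn, hSindex n]; exact hm0⟩
  -- Step 6 : L is finite
  have hψpow : ∀ (n : ℕ) (y : ↥Γ'),
      (((ψ ^ n : Monoid.End ↥Γ') : ↥Γ' →* ↥Γ') y : Γ) = ((φ ^ n : Monoid.End Γ) : Γ →* Γ) (y : Γ) := by
    intro n
    induction n with
    | zero => intro y; rfl
    | succ p ih =>
      intro y
      have h1 : ((ψ ^ (p + 1) : Monoid.End ↥Γ') : ↥Γ' →* ↥Γ') y
          = ((ψ ^ p : Monoid.End ↥Γ') : ↥Γ' →* ↥Γ') (ψ y) := by rw [pow_succ]; rfl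
      rw [h1, ih (ψ y), hpow_succ, hres y]
  have hLfin : Finite ↥L := by
    have hmemL : ∀ x : ↥L, ∀ n : ℕ, (x : ↥H) ∈ S n := by
      intro x n
      exact Subgroup.mem_iInf.mp x.2 n
    have hmemΓ' : ∀ x : ↥L, ((x : ↥H) : Γ) ∈ Γ' := by
      intro x
      obtain ⟨z, hz, hze⟩ := hmemL x 0
      have : z = (x : ↥H) := hze
      rw [← this]
      exact hz
    set F := ⨅ n : ℕ, MonoidHom.range ((ψ ^ (n + 1) : Monoid.End ↥Γ') : ↥Γ' →* ↥Γ') with hF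
    haveI hFfin : Finite ↥F := h.2.2
    have hmemF : ∀ x : ↥L, (⟨((x : ↥H) : Γ), hmemΓ' x⟩ : ↥Γ') ∈ F := by
      intro x
      rw [hF, Subgroup.mem_iInf]
      intro n
      obtain ⟨z, hz, hze⟩ := hmemL x (n + 1)
      refine ⟨⟨(z : Γ), hz⟩, ?_⟩
      apply Subtype.ext
      refine (hψpow (n + 1) ⟨(z : Γ), hz⟩).trans ?_
      show ((φ ^ (n + 1) : Monoid.End Γ) : Γ →* Γ) (z : Γ) = ((x : ↥H) : Γ)
      rw [← hβpow (n + 1) z]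
      exact congrArg Subtype.val hze
    refine Finite.of_injective (fun x : ↥L => (⟨_, hmemF x⟩ : ↥F)) ?_
    intro a b hab
    have h1 : ((a : ↥H) : Γ) = ((b : ↥H) : Γ) :=
      congrArg (fun t : ↥F => ((t : ↥Γ') : Γ)) hab
    exact Subtype.ext (Subtype.ext h1)
  -- Step 7 : conclude
  haveI : Finite (↥H ⧸ L) := Subgroup.finite_quotient_of_finiteIndex
  exact Finite.of_equiv _ (Subgroup.groupEquivQuotientProdSubgroup (s := L)).symm
end

section
/- Let Γ be a virtually polycyclic group. Every injective endomorphism φ: Γ → Γ has image φ(Γ) of finite index in Γ. -/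
open Subgroup

section Helpers
variable {G : Type*} [Group G]

/-- Elements of `H ⊔ A` factor as `h * a` when `H` normalizes `A`. -/
lemma mem_sup_decomp {H A B : Subgroup G} (hHB : H ≤ B)
    (hnorm : ∀ x ∈ B, ∀ a ∈ A, x * a * x⁻¹ ∈ A) {x : G} (hx : x ∈ H ⊔ A) :
    ∃ h ∈ H, ∃ a ∈ A, x = h * a := by
  let S : Subgroup G :=
    { carrier := {x | ∃ h ∈ H, ∃ a ∈ A, x = h * a}
      one_mem' := ⟨1, one_mem _, 1, one_mem _, (one_mul 1).symm⟩
      mul_mem' := by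
        rintro x y ⟨h1, hh1, a1, ha1, rfl⟩ ⟨h2, hh2, a2, ha2, rfl⟩
        refine ⟨h1 * h2, mul_mem hh1 hh2, (h2⁻¹ * a1 * h2) * a2,
          mul_mem ?_ ha2, by group⟩
        have := hnorm h2⁻¹ (inv_mem (hHB hh2)) a1 ha1
        rwa [inv_inv] at this
      inv_mem' := by
        rintro x ⟨h, hh, a, ha, rfl⟩
        exact ⟨h⁻¹, inv_mem hh, h * a⁻¹ * h⁻¹,
          hnorm h (hHB hh) a⁻¹ (inv_mem ha), by group⟩ }
  have : H ⊔ A ≤ S := sup_le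
    (fun h hh => ⟨h, hh, 1, one_mem _, (mul_one h).symm⟩)
    (fun a ha => ⟨1, one_mem _, a, ha, (one_mul a).symm⟩)
  exact this hx

end Helpers

section Split
variable {G : Type*} [Group G]

/-- If `H` normalizes `N` and `[N : H ⊓ N]` is finite, then `[H ⊔ N : H]` is finite. -/
lemma relindex_sup_ne_zero {H N B : Subgroup G} (hHB : H ≤ B) (hNB : N ≤ B)
    (hnorm : ∀ x ∈ B, ∀ a ∈ N, x * a * x⁻¹ ∈ N)
    (h1 : (H ⊓ N).relIndex N ≠ 0) : H.relIndex (H ⊔ N) ≠ 0 := by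
  obtain ⟨-, hfin⟩ := Nat.card_ne_zero.mp h1
  set M : Subgroup G := H ⊔ N with hMdef
  have hNM : N ≤ M := le_sup_right
  let ψ : (N : Subgroup G) ⧸ (H ⊓ N).subgroupOf N → M ⧸ H.subgroupOf M :=
    Quotient.map' (fun n => (⟨(n : G), hNM n.2⟩ : M))
      (by
        intro n1 n2 hn
        rw [QuotientGroup.leftRel_apply, mem_subgroupOf] at hn
        rw [QuotientGroup.leftRel_apply, mem_subgroupOf]
        exact hn.1)
  have hsurj : Function.Surjective ψ := by
    intro q
    induction q using Quotient.inductionOn' with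
    | h x =>
      obtain ⟨x, hxM⟩ := x
      obtain ⟨h, hh, n, hn, rfl⟩ := mem_sup_decomp hHB hnorm hxM
      have hn' : h * n * h⁻¹ ∈ N := hnorm h (hHB hh) n hn
      refine ⟨Quotient.mk'' ⟨h * n * h⁻¹, hn'⟩, ?_⟩
      show QuotientGroup.mk (⟨h * n * h⁻¹, hNM hn'⟩ : M) = QuotientGroup.mk _
      rw [QuotientGroup.eq, mem_subgroupOf]
      show (h * n * h⁻¹)⁻¹ * (h * n) ∈ H
      have heq : (h * n * h⁻¹)⁻¹ * (h * n) = h := by group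
      rw [heq]; exact hh
  have hfin' : Finite (M ⧸ H.subgroupOf M) := Finite.of_surjective ψ hsurj
  exact Nat.card_ne_zero.mpr ⟨⟨QuotientGroup.mk 1⟩, hfin'⟩

lemma relindex_split {A B H K : Subgroup G} (hAB : A ≤ B) (hHK : H ≤ K) (hKB : K ≤ B)
    (hnorm : ∀ x ∈ B, ∀ a ∈ A, x * a * x⁻¹ ∈ A)
    (h1 : (H ⊓ A).relIndex (K ⊓ A) ≠ 0)
    (h2 : (H ⊔ A).relIndex (K ⊔ A) ≠ 0) : H.relIndex K ≠ 0 := by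
  have hHB : H ≤ B := hHK.trans hKB
  set M : Subgroup G := H ⊔ (K ⊓ A) with hMdef
  have hHM : H ≤ M := le_sup_left
  have hMK : M ≤ K := sup_le hHK inf_le_left
  have hnorm' : ∀ x ∈ K, ∀ a ∈ K ⊓ A, x * a * x⁻¹ ∈ K ⊓ A := by
    intro x hx a ha
    rw [Subgroup.mem_inf] at ha ⊢
    exact ⟨mul_mem (mul_mem hx ha.1) (inv_mem hx), hnorm x (hKB hx) a ha.2⟩
  -- [M : H] is finite
  have hb : H.relIndex M ≠ 0 := by
    apply relindex_sup_ne_zero hHK inf_le_left hnorm'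
    have heq : H ⊓ (K ⊓ A) = H ⊓ A := by rw [← inf_assoc, inf_eq_left.mpr hHK]
    rw [heq]; exact h1
  -- [K : M] is finite
  have hMeq : M = (H ⊔ A) ⊓ K := by
    apply le_antisymm
    · exact sup_le (le_inf le_sup_left hHK)
        (le_inf (inf_le_right.trans le_sup_right) inf_le_left)
    · intro x hx
      rw [Subgroup.mem_inf] at hx
      obtain ⟨hx1, hx2⟩ := hx
      obtain ⟨h, hh, a, ha, rfl⟩ := mem_sup_decomp hHB hnorm hx1
      have haK : a ∈ K := by
        have : h⁻¹ * (h * a) ∈ K := mul_mem (inv_mem (hHK hh)) hx2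
        simpa using this
      exact mul_mem (hHM hh) (Subgroup.mem_sup_right (Subgroup.mem_inf.mpr ⟨haK, ha⟩))
  have hc : M.relIndex K ≠ 0 := by
    rw [hMeq, inf_relIndex_right]
    intro h0
    exact h2 (relIndex_eq_zero_of_le_right le_sup_left h0)
  intro h0
  have := relIndex_mul_relIndex H M K hHM hMK
  exact mul_ne_zero hb hc (this.trans h0)

end Split

section Cyclic
variable {G : Type*} [Group G]

/-- If a step between `A` and `B` has infinite index, some nonzero power of `g` lies above. -/
lemma exists_zpow_of_relindex_zero {A K L B : Subgroup G} {g : G}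
    (hAK : A ≤ K) (hKL : K ≤ L) (hLB : L ≤ B)
    (hgen : ∀ y ∈ B, ∃ k : ℤ, y * (g ^ k)⁻¹ ∈ A)
    (h0 : K.relIndex L = 0) : ∃ k : ℤ, k ≠ 0 ∧ g ^ k ∈ L := by
  by_contra hcon
  push_neg at hcon
  have hLK : L ≤ K := by
    intro y hy
    obtain ⟨k, hk⟩ := hgen y (hLB hy)
    have hgm : g ^ k ∈ L := by
      have : (y * (g ^ k)⁻¹)⁻¹ * y ∈ L := mul_mem (inv_mem (hKL (hAK hk))) hy
      have heq : (y * (g ^ k)⁻¹)⁻¹ * y = g ^ k := by group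
      rwa [heq] at this
    have hk0 : k = 0 := by
      by_contra hne
      exact (hcon k hne) hgm
    rw [hk0] at hk
    simp only [zpow_zero, inv_one, mul_one] at hk
    exact hAK hk
  have : K = L := le_antisymm hKL hLK
  rw [this, relIndex_self] at h0
  exact one_ne_zero h0

/-- If a nonzero power of `g` lies in `K`, then `[L : K]` is finite. -/
lemma relindex_ne_zero_of_zpow_mem {A K L B : Subgroup G} {g : G} (hgB : g ∈ B)
    (hAK : A ≤ K) (hKL : K ≤ L) (hLB : L ≤ B)
    (hnorm : ∀ x ∈ B, ∀ a ∈ A, x * a * x⁻¹ ∈ A)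
    (hgen : ∀ y ∈ B, ∃ k : ℤ, y * (g ^ k)⁻¹ ∈ A)
    {k : ℤ} (hk : k ≠ 0) (hgk : g ^ k ∈ K) : K.relIndex L ≠ 0 := by
  -- reduce to positive k
  obtain ⟨k, hkpos, hgk⟩ : ∃ k : ℤ, 0 < k ∧ g ^ k ∈ K := by
    rcases lt_trichotomy k 0 with hlt | heq | hgt
    · refine ⟨-k, by omega, ?_⟩
      rw [zpow_neg]; exact inv_mem hgk
    · exact absurd heq hk
    · exact ⟨k, hgt, hgk⟩
  -- the quotient L ⧸ K is finite: covered by the classes of g^r, 0 ≤ r < k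
  have hfin : Finite (L ⧸ K.subgroupOf L) := by
    classical
    refine Finite.of_surjective
      (fun j : Fin k.toNat =>
        if h : g ^ ((j : ℕ) : ℤ) ∈ L then
          QuotientGroup.mk (⟨g ^ ((j : ℕ) : ℤ), h⟩ : L)
        else QuotientGroup.mk 1) ?_
    intro q
    induction q using Quotient.inductionOn' with
    | h y =>
      obtain ⟨y, hy⟩ := y
      obtain ⟨m, ham⟩ := hgen y (hLB hy)
      set a : G := y * (g ^ m)⁻¹ with hadef
      have hgm : g ^ m ∈ L := by
        have : a⁻¹ * y ∈ L := mul_mem (inv_mem (hKL (hAK ham))) hy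
        have heq : a⁻¹ * y = g ^ m := by rw [hadef]; group
        rwa [heq] at this
      set r : ℤ := m % k with hrdef
      set q' : ℤ := m / k with hqdef
      have hr0 : 0 ≤ r := Int.emod_nonneg m (by omega)
      have hrk : r < k := Int.emod_lt_of_pos m hkpos
      have hmr : m - r = k * q' := by
        rw [hrdef, hqdef]
        have h := Int.mul_ediv_add_emod m k
        linarith
      have hgr : g ^ r ∈ L := by
        have : g ^ m * (g ^ (k * q'))⁻¹ ∈ L := by
          refine mul_mem hgm (inv_mem ?_)
          rw [zpow_mul]
          exact hKL (zpow_mem hgk q')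
        have heq : m - k * q' = r := by linarith
        rwa [← zpow_sub, heq] at this
      refine ⟨⟨r.toNat, by omega⟩, ?_⟩
      have hcast : ((r.toNat : ℕ) : ℤ) = r := Int.toNat_of_nonneg hr0
      simp only [hcast]
      rw [dif_pos hgr]
      rw [QuotientGroup.eq, mem_subgroupOf]
      show (g ^ r)⁻¹ * y ∈ K
      have hyeq : y = a * g ^ m := by rw [hadef]; group
      have hdecomp : (g ^ r)⁻¹ * y = (g ^ (-r) * a * (g ^ (-r))⁻¹) * g ^ (k * q') := by
        rw [hyeq, zpow_neg, ← hmr, zpow_sub]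
        group
      rw [hdecomp]
      refine mul_mem (hAK (hnorm _ ?_ a ham)) ?_
      · exact zpow_mem hgB _
      · rw [zpow_mul]; exact zpow_mem hgk q'
  exact Nat.card_ne_zero.mpr ⟨⟨QuotientGroup.mk 1⟩, hfin⟩

end Cyclic

section Count
variable {G : Type*} [Group G]

lemma chain_count {n : ℕ} {s : Fin (n + 1) → Subgroup G}
    (hs0 : s 0 = ⊥)
    (hstep : ∀ i : Fin n,
      s i.castSucc ≤ s i.succ ∧
      (∀ x ∈ s i.succ, ∀ y ∈ s i.castSucc, x * y * x⁻¹ ∈ s i.castSucc) ∧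
      (∃ g ∈ s i.succ, ∀ y ∈ s i.succ, ∃ k : ℤ, y * (g ^ k)⁻¹ ∈ s i.castSucc))
    (j : Fin (n + 1)) {m : ℕ} (H : ℕ → Subgroup G) (hmono : ∀ i, H i ≤ H (i + 1)) :
    ((Finset.range m).filter
      (fun i => (H i ⊓ s j).relIndex (H (i + 1) ⊓ s j) = 0)).card ≤ (j : ℕ) := by
  classical
  induction j using Fin.induction with
  | zero =>
    have : ∀ i : ℕ, ¬ ((H i ⊓ s 0).relIndex (H (i + 1) ⊓ s 0) = 0) := by
      intro i
      rw [hs0, inf_bot_eq, inf_bot_eq, relIndex_self]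
      exact one_ne_zero
    simp [Finset.filter_false_of_mem (fun i _ => this i)]
  | succ j ih =>
    obtain ⟨hAB, hnorm, g, hgB, hgen⟩ := hstep j
    set A : Subgroup G := s j.castSucc with hA
    set B : Subgroup G := s j.succ with hB
    set K : ℕ → Subgroup G := fun x => (H x ⊓ B) ⊔ A with hK
    have hKmono : Monotone K :=
      monotone_nat_of_le_succ fun x => sup_le_sup_right (inf_le_inf_right _ (hmono x)) A
    have hAK : ∀ x, A ≤ K x := fun x => le_sup_right
    have hKB : ∀ x, K x ≤ B := fun x => sup_le inf_le_right hAB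
    set SA := (Finset.range m).filter
      (fun i => (H i ⊓ A).relIndex (H (i + 1) ⊓ A) = 0) with hSA
    set SQ := (Finset.range m).filter (fun i => (K i).relIndex (K (i + 1)) = 0) with hSQ
    have hsub : (Finset.range m).filter
        (fun i => (H i ⊓ B).relIndex (H (i + 1) ⊓ B) = 0) ⊆ SA ∪ SQ := by
      intro i hi
      rw [Finset.mem_filter] at hi
      rw [Finset.mem_union, hSA, hSQ, Finset.mem_filter, Finset.mem_filter]
      by_contra hcon
      push_neg at hcon
      have h1 : (H i ⊓ A).relIndex (H (i + 1) ⊓ A) ≠ 0 := fun h => (hcon.1 hi.1) h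
      have h2 : (K i).relIndex (K (i + 1)) ≠ 0 := fun h => (hcon.2 hi.1) h
      have heq1 : (H i ⊓ B) ⊓ A = H i ⊓ A := by rw [inf_assoc, inf_eq_right.mpr hAB]
      have heq2 : (H (i + 1) ⊓ B) ⊓ A = H (i + 1) ⊓ A := by
        rw [inf_assoc, inf_eq_right.mpr hAB]
      rw [← heq1, ← heq2] at h1
      exact relindex_split hAB (inf_le_inf_right B (hmono i)) inf_le_right hnorm h1 h2 hi.2
    have hSQ1 : SQ.card ≤ 1 := by
      rw [Finset.card_le_one]
      have key : ∀ a ∈ SQ, ∀ b ∈ SQ, a < b → False := by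
        intro a ha b hb hab
        rw [hSQ, Finset.mem_filter] at ha hb
        obtain ⟨k, hk0, hgkL⟩ := exists_zpow_of_relindex_zero (hAK a)
          (hKmono (Nat.le_succ a)) (hKB _) hgen ha.2
        have hgkKb : g ^ k ∈ K b := hKmono (by omega : a + 1 ≤ b) hgkL
        exact relindex_ne_zero_of_zpow_mem hgB (hAK b) (hKmono (Nat.le_succ b)) (hKB _)
          hnorm hgen hk0 hgkKb hb.2
      intro a ha b hb
      rcases lt_trichotomy a b with hlt | heq | hgt
      · exact (key a ha b hb hlt).elim
      · exact heq
      · exact (key b hb a ha hgt).elim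
    have hIH := ih
    calc ((Finset.range m).filter
        (fun i => (H i ⊓ s j.succ).relIndex (H (i + 1) ⊓ s j.succ) = 0)).card
        ≤ (SA ∪ SQ).card := Finset.card_le_card hsub
      _ ≤ SA.card + SQ.card := Finset.card_union_le _ _
      _ ≤ (j : ℕ) + 1 := by
          have hc : (j.castSucc : ℕ) = (j : ℕ) := rfl
          omega

end Count

section Bound
variable {G : Type*} [Group G]

lemma chain_bound {n : ℕ} {s : Fin (n + 1) → Subgroup G}
    (hs0 : s 0 = ⊥) (hstop : s (Fin.last n) = ⊤)
    (hstep : ∀ i : Fin n,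
      s i.castSucc ≤ s i.succ ∧
      (∀ x ∈ s i.succ, ∀ y ∈ s i.castSucc, x * y * x⁻¹ ∈ s i.castSucc) ∧
      (∃ g ∈ s i.succ, ∀ y ∈ s i.succ, ∃ k : ℤ, y * (g ^ k)⁻¹ ∈ s i.castSucc))
    {m : ℕ} (H : ℕ → Subgroup G) (hmono : ∀ i, H i ≤ H (i + 1))
    (hrel : ∀ i < m, (H i).relIndex (H (i + 1)) = 0) : m ≤ n := by
  classical
  have hcc := chain_count hs0 hstep (Fin.last n) H hmono (m := m)
  rw [hstop] at hcc
  rw [Finset.filter_true_of_mem (fun i hi => by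
    rw [inf_top_eq, inf_top_eq]
    exact hrel i (Finset.mem_range.mp hi))] at hcc
  rwa [Finset.card_range, Fin.val_last] at hcc

end Bound

/-- A group is polycyclic if it admits a subnormal series with cyclic quotients. -/
def IsPolycyclic (G : Type*) [Group G] : Prop :=
  ∃ (n : ℕ) (s : Fin (n + 1) → Subgroup G),
    s 0 = ⊥ ∧ s (Fin.last n) = ⊤ ∧
    ∀ i : Fin n,
      s i.castSucc ≤ s i.succ ∧
      (∀ x ∈ s i.succ, ∀ y ∈ s i.castSucc, x * y * x⁻¹ ∈ s i.castSucc) ∧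
      (∃ g ∈ s i.succ, ∀ y ∈ s i.succ, ∃ k : ℤ, y * (g ^ k)⁻¹ ∈ s i.castSucc)

/-- A group is virtually polycyclic if it has a polycyclic subgroup of finite index. -/
def IsVirtuallyPolycyclic (G : Type*) [Group G] : Prop :=
  ∃ H : Subgroup G, H.FiniteIndex ∧ IsPolycyclic ↥H

theorem stmt8 {Γ : Type*} [Group Γ] (h : IsVirtuallyPolycyclic Γ)
    (φ : Monoid.End Γ) (hinj : Function.Injective φ) :
    (MonoidHom.range (φ : Γ →* Γ)).FiniteIndex := by
  obtain ⟨P, hPfin, n, s, hs0, hstop, hstep⟩ := h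
  haveI := hPfin
  by_contra hc
  have hidx : (MonoidHom.range (φ : Γ →* Γ)).index = 0 := by
    by_contra h0; exact hc ⟨h0⟩
  -- injectivity of powers
  have hpowinj : ∀ a : ℕ, Function.Injective ⇑(φ ^ a : Monoid.End Γ) := by
    intro a
    rw [Monoid.End.coe_pow]
    exact Function.Injective.iterate hinj a
  -- the chain of ranges of iterates
  set m : ℕ := n + 1 with hm
  set H : ℕ → Subgroup Γ := fun i => MonoidHom.range ((φ ^ (m - i) : Monoid.End Γ) : Γ →* Γ)
    with hHdef
  have hrangele : ∀ a : ℕ,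
      MonoidHom.range ((φ ^ (a + 1) : Monoid.End Γ) : Γ →* Γ) ≤
      MonoidHom.range ((φ ^ a : Monoid.End Γ) : Γ →* Γ) := by
    intro a x hx
    obtain ⟨y, rfl⟩ := hx
    refine ⟨φ y, ?_⟩
    rw [pow_succ]
    rfl
  have hmono : ∀ i, H i ≤ H (i + 1) := by
    intro i
    rcases Nat.lt_or_ge i m with hi | hi
    · have : m - i = (m - (i + 1)) + 1 := by omega
      rw [hHdef]
      dsimp only
      rw [this]
      exact hrangele (m - (i + 1))
    · have : m - i = m - (i + 1) := by omega
      rw [hHdef]; dsimp only; rw [this]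
  -- each step has infinite index
  have hrelzero : ∀ a : ℕ,
      (MonoidHom.range ((φ ^ (a + 1) : Monoid.End Γ) : Γ →* Γ)).relIndex
        (MonoidHom.range ((φ ^ a : Monoid.End Γ) : Γ →* Γ)) = 0 := by
    intro a
    have hcomp : ((φ ^ (a + 1) : Monoid.End Γ) : Γ →* Γ) = ((φ ^ a : Monoid.End Γ) : Γ →* Γ).comp
        (φ : Γ →* Γ) := by
      rw [pow_succ]; rfl
    have h1 : MonoidHom.range ((φ ^ (a + 1) : Monoid.End Γ) : Γ →* Γ) =
        (MonoidHom.range (φ : Γ →* Γ)).map ((φ ^ a : Monoid.End Γ) : Γ →* Γ) := by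
      rw [hcomp]; exact MonoidHom.range_comp _ _
    have h2 : MonoidHom.range ((φ ^ a : Monoid.End Γ) : Γ →* Γ) =
        (⊤ : Subgroup Γ).map ((φ ^ a : Monoid.End Γ) : Γ →* Γ) :=
      MonoidHom.range_eq_map _
    have e := Subgroup.relIndex_comap
      (H := (MonoidHom.range (φ : Γ →* Γ)).map ((φ ^ a : Monoid.End Γ) : Γ →* Γ))
      ((φ ^ a : Monoid.End Γ) : Γ →* Γ) ⊤
    rw [h1, h2, ← e,
      Subgroup.comap_map_eq_self_of_injective (hpowinj a),
      Subgroup.relIndex_top_right]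
    exact hidx
  have hrel : ∀ i < m, (H i).relIndex (H (i + 1)) = 0 := by
    intro i hi
    have e1 : m - i = (m - (i + 1)) + 1 := by omega
    rw [hHdef]; dsimp only; rw [e1]
    exact hrelzero (m - (i + 1))
  -- transfer the chain into P
  set H' : ℕ → Subgroup ↥P := fun i => (H i ⊓ P).subgroupOf P with hH'def
  have hmono' : ∀ i, H' i ≤ H' (i + 1) := fun i =>
    Subgroup.comap_mono (inf_le_inf_right P (hmono i))
  have hrel' : ∀ i < m, (H' i).relIndex (H' (i + 1)) = 0 := by
    intro i hi
    rw [hH'def]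
    dsimp only
    rw [Subgroup.relIndex_subgroupOf inf_le_right]
    by_contra hne
    have hPrel : P.relIndex (H (i + 1)) ≠ 0 :=
      (Subgroup.instFiniteIndex_subgroupOf P (H (i + 1))).index_ne_zero
    have h2 : (H (i + 1) ⊓ P).relIndex (H (i + 1)) ≠ 0 := by
      rwa [inf_comm, inf_relIndex_right]
    have hle1 : H i ⊓ P ≤ H (i + 1) ⊓ P := inf_le_inf_right P (hmono i)
    have hle2 : H (i + 1) ⊓ P ≤ H (i + 1) := inf_le_left
    have hprod := Subgroup.relIndex_mul_relIndex (H i ⊓ P) (H (i + 1) ⊓ P) (H (i + 1))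
      hle1 hle2
    have hne2 : (H i ⊓ P).relIndex (H (i + 1)) ≠ 0 := by
      rw [← hprod]; exact mul_ne_zero hne h2
    exact hne2 (Subgroup.relIndex_eq_zero_of_le_left inf_le_left (hrel i hi))
  have := chain_bound hs0 hstop hstep H' hmono' hrel'
  omega
end

section
/- Let N be a nilpotent group and φ: N → N an automorphism of finite order that induces the identity map on the abelianization N/[N,N]. Then φ is the identity automorphism, provided N is torsion-free and radicable. -/
/-- A group is radicable (divisible) if every element has an `m`-th root for each `m > 0`. -/
def Radicable (G : Type*) [Group G] : Prop :=
  ∀ (x : G) (m : ℕ), 0 < m → ∃ y : G, y ^ m = x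

/-- A monoid is torsion-free if its only element of finite order is the identity
(the definition Mathlib had as `Monoid.IsTorsionFree`, since removed). -/
def Monoid.IsTorsionFree (G : Type*) [Monoid G] : Prop :=
  ∀ g : G, g ≠ 1 → ¬IsOfFinOrder g

theorem stmt10 {N : Type*} [Group N] [Group.IsNilpotent N]
    (htf : Monoid.IsTorsionFree N) (hrad : Radicable N) (φ : MulAut N)
    (hord : IsOfFinOrder φ)
    (h : ∀ x : N, φ x * x⁻¹ ∈ commutator N) :
    φ = 1 := by
  obtain ⟨n, hn, hφn⟩ := isOfFinOrder_iff_pow_eq_one.mp hord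
  -- the key induction: φ x * x⁻¹ lies in every term of the lower central series
  have key : ∀ k, ∀ x : N, x⁻¹ * φ x ∈ (⊤ : Subgroup N).lowerCentralSeries (k + 1) := by
    intro k
    induction k with
    | zero =>
      intro x
      rw [Subgroup.top_lowerCentralSeries_one]
      have h1 : x⁻¹ * (φ x * x⁻¹) * x ∈ commutator N :=
        (Subgroup.commutator_normal ⊤ ⊤).conj_mem' _ (h x) x
      have : x⁻¹ * (φ x * x⁻¹) * x = x⁻¹ * φ x * (x⁻¹ * x) := by group
      rw [this, inv_mul_cancel, mul_one] at h1
      exact h1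
    | succ k ih =>
      intro x
      set H := (⊤ : Subgroup N).lowerCentralSeries (k + 2) with hH
      -- quotient by H
      let Q := N ⧸ H
      -- the images of elements of (⊤ : Subgroup N).lowerCentralSeries (k+1) are central in Q
      have hcent : ∀ z : N, z ∈ (⊤ : Subgroup N).lowerCentralSeries (k + 1) →
          ((z : Q)) ∈ Subgroup.center Q := by
        intro z hz
        rw [Subgroup.mem_center_iff]
        intro g
        induction g using QuotientGroup.induction_on with
        | H a =>
          show ((a * z : N) : Q) = ((z * a : N) : Q)
          rw [QuotientGroup.eq]
          have : (a * z)⁻¹ * (z * a) = (open scoped commutatorElement in ⁅z⁻¹, a⁻¹⁆) := by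
            simp [commutatorElement_def]; group
          rw [this]
          rw [hH, Subgroup.lowerCentralSeries_succ]
          exact Subgroup.commutator_mem_commutator (inv_mem hz) (Subgroup.mem_top _)
      -- D : N →* Q sending x to the class of x⁻¹ * φ x
      have hmul : ∀ x y : N, (((x * y)⁻¹ * φ (x * y) : N) : Q) =
          ((x⁻¹ * φ x : N) : Q) * ((y⁻¹ * φ y : N) : Q) := by
        intro x y
        have e : (x * y)⁻¹ * φ (x * y) = y⁻¹ * (x⁻¹ * φ x) * y * (y⁻¹ * φ y) := by
          rw [map_mul]; group
        rw [e]
        have hc := hcent _ (ih x)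
        rw [Subgroup.mem_center_iff] at hc
        show ((y⁻¹ : N) : Q) * ((x⁻¹ * φ x : N) : Q) * ((y : N) : Q) *
            ((y⁻¹ * φ y : N) : Q) = ((x⁻¹ * φ x : N) : Q) * ((y⁻¹ * φ y : N) : Q)
        rw [hc]
        have e5 : ((y⁻¹ : N) : Q) = (((y : N) : Q))⁻¹ := rfl
        rw [e5]
        group
      let D : N →* Q :=
        { toFun := fun x => ((x⁻¹ * φ x : N) : Q)
          map_one' := by simp
          map_mul' := hmul }
      -- D kills the commutator subgroup
      have hker : ∀ z ∈ commutator N, D z = 1 := by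
        intro z hz
        have : commutator N ≤ D.ker := by
          rw [commutator_def]
          rw [Subgroup.commutator_le]
          intro g _ t _
          have : D (open scoped commutatorElement in ⁅g, t⁆) = (open scoped commutatorElement in ⁅D g, D t⁆) := map_commutatorElement D g t
          rw [MonoidHom.mem_ker, this]
          have hg : D g ∈ Subgroup.center Q := hcent _ (ih g)
          exact commutatorElement_eq_one_iff_commute.mpr
            (Subgroup.mem_center_iff.mp hg (D t)).symm
        exact this hz
      -- φ descends to Q
      have hle : H ≤ H.comap φ.toMonoidHom := by
        intro z hz
        simp only [Subgroup.mem_comap]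
        exact Subgroup.lowerCentralSeries.map φ.toMonoidHom (k + 2) ⟨z, hz, rfl⟩
      let φb : Q →* Q := QuotientGroup.map H H φ.toMonoidHom hle
      have hφb : ∀ z : N, φb ((z : N) : Q) = ((φ z : N) : Q) := fun z => rfl
      -- φb fixes D x for every x
      have hfix : ∀ x : N, φb (D x) = D x := by
        intro x
        have hmem : x⁻¹ * φ x ∈ commutator N := by
          rw [← Subgroup.top_lowerCentralSeries_one]
          exact Subgroup.lowerCentralSeries_antitone ⊤ (by omega : (1 : ℕ) ≤ k + 1) (ih x)
        have h1 : D (x⁻¹ * φ x) = 1 := hker _ hmem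
        have : ((( x⁻¹ * φ x)⁻¹ * φ (x⁻¹ * φ x) : N) : Q) = 1 := h1
        rw [QuotientGroup.eq_one_iff] at this
        show ((φ (x⁻¹ * φ x) : N) : Q) = ((x⁻¹ * φ x : N) : Q)
        exact (QuotientGroup.eq.mpr this).symm
      -- power formula
      have hpow : ∀ (j : ℕ) (x : N), ((x⁻¹ * (φ ^ j) x : N) : Q) = (D x) ^ j := by
        intro j x
        induction j with
        | zero => simp
        | succ j ihj =>
          have e1 : (φ ^ (j + 1)) x = (φ ^ j) (φ x) := by
            rw [pow_succ]; rfl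
          have e2 : x⁻¹ * (φ ^ j) (φ x) = (x⁻¹ * (φ ^ j) x) * ((φ ^ j) (x⁻¹ * φ x)) := by
            have : (φ ^ j) (x⁻¹ * φ x) = ((φ ^ j) x)⁻¹ * (φ ^ j) (φ x) := by
              rw [map_mul, map_inv]
            rw [this]; group
          -- image of (φ^j) (x⁻¹ * φ x) equals D x
          have e3 : ∀ i : ℕ, (((φ ^ i) (x⁻¹ * φ x) : N) : Q) = D x := by
            intro i
            induction i with
            | zero => rfl
            | succ i ihi =>
              have : (φ ^ (i + 1)) (x⁻¹ * φ x) = φ ((φ ^ i) (x⁻¹ * φ x)) := by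
                rw [pow_succ']; rfl
              rw [this, ← hφb, ihi, hfix]
          rw [e1, e2, QuotientGroup.mk_mul, ihj, e3, pow_succ]
      -- conclude using radicability
      obtain ⟨y, hy⟩ := hrad x n hn
      have hDy : (D y) ^ n = 1 := by
        rw [← hpow n y, hφn]
        simp
      have hDx : D x = 1 := by
        rw [← hy, map_pow, hDy]
      have : ((x⁻¹ * φ x : N) : Q) = 1 := hDx
      rwa [QuotientGroup.eq_one_iff] at this
  -- finish using nilpotency
  obtain ⟨c, hc⟩ := Subgroup.nilpotent_iff_lowerCentralSeries.mp ‹Group.IsNilpotent N›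
  have : ∀ x : N, φ x = x := by
    intro x
    have hx := key c x
    have : x⁻¹ * φ x ∈ (⊥ : Subgroup N) := by
      rw [← hc]
      exact Subgroup.lowerCentralSeries_antitone ⊤ (Nat.le_succ c) hx
    rw [Subgroup.mem_bot] at this
    have := congrArg (x * ·) this
    simpa using this
  exact MulEquiv.ext this
end

section
/- Let φ: ℤᵐ → ℤᵐ be an injective endomorphism (given by an integer matrix with nonzero determinant) all of whose complex eigenvalues have absolute value strictly greater than 1. Then ⋂_{n>0} φⁿ(ℤᵐ) = {0}. -/
open Matrix Filter Topology
open scoped NNReal ENNReal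

attribute [local instance] Matrix.linftyOpNormedRing Matrix.linftyOpNormedAlgebra

lemma aux_pow_tendsto {A : Type*} [NormedRing A] [NormedAlgebra ℂ A] [CompleteSpace A]
    (a : A) (h : spectralRadius ℂ a < 1) :
    Tendsto (fun n : ℕ => ‖a ^ n‖) atTop (𝓝 0) := by
  obtain ⟨r, hr1, hr2⟩ := ENNReal.lt_iff_exists_nnreal_btwn.mp h
  have hgel := spectrum.pow_nnnorm_pow_one_div_tendsto_nhds_spectralRadius a
  have hev : ∀ᶠ n : ℕ in atTop, (‖a ^ n‖₊ : ℝ≥0∞) ^ (1 / (n : ℝ)) < (r : ℝ≥0∞) :=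
    hgel.eventually_lt_const hr1
  have hev2 : ∀ᶠ n : ℕ in atTop, ‖a ^ n‖ ≤ (r : ℝ) ^ n := by
    filter_upwards [hev, eventually_ge_atTop 1] with n hn hn1
    have hne : (n : ℝ) ≠ 0 := by
      exact_mod_cast Nat.one_le_iff_ne_zero.mp hn1
    have h2 : ((‖a ^ n‖₊ : ℝ≥0∞) ^ (1 / (n : ℝ))) ^ (n : ℝ) < (r : ℝ≥0∞) ^ (n : ℝ) :=
      ENNReal.rpow_lt_rpow hn (by positivity)
    rw [← ENNReal.rpow_mul, one_div_mul_cancel hne, ENNReal.rpow_one,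
      ENNReal.rpow_natCast, ← ENNReal.coe_pow, ENNReal.coe_lt_coe] at h2
    have : ‖a ^ n‖ ≤ ((r ^ n : ℝ≥0) : ℝ) := by
      exact_mod_cast h2.le
    simpa using this
  have hrlt : (r : ℝ) < 1 := by exact_mod_cast ENNReal.coe_lt_one_iff.mp hr2
  exact squeeze_zero' (Eventually.of_forall fun n => norm_nonneg _) hev2
    (tendsto_pow_atTop_nhds_zero_of_lt_one r.coe_nonneg hrlt)

theorem stmt13 {m : ℕ} (A : Matrix (Fin m) (Fin m) ℤ) (hdet : A.det ≠ 0)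
    (heig : ∀ μ ∈ spectrum ℂ (A.map (Int.cast : ℤ → ℂ)), 1 < ‖μ‖) :
    (⨅ n : ℕ, LinearMap.range (Matrix.mulVecLin (A ^ (n + 1)))) = ⊥ := by
  rw [eq_bot_iff]
  intro x hx
  rw [Submodule.mem_bot]
  by_contra hx0
  have hm : 0 < m := by
    rcases Nat.eq_zero_or_pos m with hm0 | hm0
    · subst hm0; exact absurd (Subsingleton.elim x 0) hx0
    · exact hm0
  haveI : Nonempty (Fin m) := Fin.pos_iff_nonempty.mp hm
  set B : Matrix (Fin m) (Fin m) ℂ := A.map (Int.cast : ℤ → ℂ) with hBdef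
  have hBdet : IsUnit B.det := by
    have : B.det = ((A.det : ℤ) : ℂ) := (RingHom.map_det (Int.castRingHom ℂ) A).symm
    rw [this]
    exact isUnit_iff_ne_zero.mpr (by exact_mod_cast hdet)
  obtain ⟨u, hu⟩ := (Matrix.isUnit_iff_isUnit_det B).mpr hBdet
  have hsr : spectralRadius ℂ (↑u⁻¹ : Matrix (Fin m) (Fin m) ℂ) < 1 := by
    have h1 : (1 : ℝ≥0∞) = ((1 : ℝ≥0) : ℝ≥0∞) := rfl
    rw [h1]
    apply spectrum.spectralRadius_lt_of_forall_lt
    intro k hk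
    have hk0 : k ≠ 0 := by
      rintro rfl
      exact spectrum.not_isUnit_of_zero_mem _ hk (u⁻¹).isUnit
    have hkinv : (((Units.mk0 k hk0)⁻¹ : ℂˣ) : ℂ) ∈ spectrum ℂ (↑u : Matrix (Fin m) (Fin m) ℂ) := by
      rw [spectrum.inv_mem_iff]
      simpa using hk
    have h2 := heig _ (by rwa [hu] at hkinv)
    have h3 : 1 < ‖k‖⁻¹ := by
      rwa [Units.val_inv_eq_inv_val, Units.val_mk0, norm_inv] at h2
    have h4 : ‖k‖ < 1 := by
      have hk0' : 0 < ‖k‖ := norm_pos_iff.mpr hk0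
      exact (one_lt_inv_iff₀.mp h3).2
    exact_mod_cast h4
  haveI : CompleteSpace (Matrix (Fin m) (Fin m) ℂ) := FiniteDimensional.complete ℂ _
  have htend := aux_pow_tendsto (↑u⁻¹ : Matrix (Fin m) (Fin m) ℂ) hsr
  set X : Fin m → ℂ := fun i => ((x i : ℤ) : ℂ) with hXdef
  have htend' : Tendsto (fun n : ℕ => ‖(↑u⁻¹ : Matrix (Fin m) (Fin m) ℂ) ^ (n + 1)‖ * ‖X‖)
      atTop (𝓝 0) := by
    simpa using (htend.comp (tendsto_add_atTop_nat 1)).mul_const ‖X‖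
  obtain ⟨n, hn⟩ := (htend'.eventually_lt_const one_pos).exists
  obtain ⟨y, hy⟩ := LinearMap.mem_range.mp ((Submodule.mem_iInf _).mp hx n)
  rw [Matrix.mulVecLin_apply] at hy
  set Y : Fin m → ℂ := fun i => ((y i : ℤ) : ℂ) with hYdef
  have hBY : B ^ (n + 1) *ᵥ Y = X := by
    funext i
    have hmap : B ^ (n + 1) = (A ^ (n + 1)).map (Int.cast : ℤ → ℂ) := by
      rw [hBdef]
      have := map_pow ((Int.castRingHom ℂ).mapMatrix) A (n + 1)
      simpa [RingHom.mapMatrix_apply] using this.symm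
    rw [hmap]
    have h5 := RingHom.map_mulVec (Int.castRingHom ℂ) (A ^ (n + 1)) y i
    rw [hy] at h5
    exact h5.symm
  have hYX : Y = (↑u⁻¹ : Matrix (Fin m) (Fin m) ℂ) ^ (n + 1) *ᵥ X := by
    rw [← hBY, Matrix.mulVec_mulVec]
    have hone : (↑u⁻¹ : Matrix (Fin m) (Fin m) ℂ) ^ (n + 1) * B ^ (n + 1) = 1 := by
      rw [← hu, ← Units.val_pow_eq_pow_val, ← Units.val_pow_eq_pow_val, ← Units.val_mul]
      simp [inv_pow]
    rw [hone, Matrix.one_mulVec]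
  have hYnorm : ‖Y‖ < 1 := by
    rw [hYX]
    calc ‖(↑u⁻¹ : Matrix (Fin m) (Fin m) ℂ) ^ (n + 1) *ᵥ X‖
        ≤ ‖(↑u⁻¹ : Matrix (Fin m) (Fin m) ℂ) ^ (n + 1)‖ * ‖X‖ :=
          Matrix.linfty_opNorm_mulVec _ _
      _ < 1 := hn
  have hy0 : y = 0 := by
    by_contra h
    obtain ⟨i, hi⟩ := Function.ne_iff.mp h
    have h1 : (1 : ℝ) ≤ ‖Y i‖ := by
      have : (1 : ℤ) ≤ |y i| := Int.one_le_abs hi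
      have h2 : ‖Y i‖ = |(y i : ℝ)| := by
        simp [hYdef, Complex.norm_intCast]
      rw [h2]
      exact_mod_cast this
    exact absurd ((norm_le_pi_norm Y i).trans_lt hYnorm) (not_lt.mpr h1)
  exact hx0 (by rw [← hy, hy0, Matrix.mulVec_zero])
end

section
/- Let N be a finitely generated torsion-free nilpotent group and φ: N → N an injective endomorphism that is expanding, meaning that on each quotient √γᵢ(N)/√γᵢ₊₁(N) ≅ ℤ^{mᵢ} of isolators of the lower central series, the induced endomorphism has all eigenvalues of absolute value strictly greater than 1. Then ⋂_{n>0} φⁿ(N) is the trivial subgroup. -/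
/-- The isolator of a subgroup: the subgroup generated by all elements having a positive
power inside the subgroup (in a nilpotent group this set is already a subgroup). -/
def isolator {N : Type*} [Group N] (H : Subgroup N) : Subgroup N :=
  Subgroup.closure {x : N | ∃ m : ℕ, 0 < m ∧ x ^ m ∈ H}

section Analytic

open scoped Topology
open Filter

attribute [local instance] Matrix.linftyOpNormedRing Matrix.linftyOpNormedAlgebra
  Matrix.linftyOpNormedAddCommGroup

lemma aux_det_ne_zero {m : ℕ} (A : Matrix (Fin m) (Fin m) ℤ)
    (heig : ∀ μ ∈ spectrum ℂ (A.map (Int.cast : ℤ → ℂ)), 1 < ‖μ‖) :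
    A.det ≠ 0 := by
  have hu : IsUnit (A.map (Int.cast : ℤ → ℂ)) := by
    by_contra h
    have := heig 0 ((spectrum.zero_mem_iff (R := ℂ)).mpr h)
    norm_num at this
  have hdet : IsUnit (A.map (Int.cast : ℤ → ℂ)).det :=
    (Matrix.isUnit_iff_isUnit_det _).mp hu
  have : (A.map (Int.cast : ℤ → ℂ)).det = ((A.det : ℤ) : ℂ) :=
    ((Int.castRingHom ℂ).map_det A).symm
  intro h0
  rw [this, h0] at hdet
  simpa using hdet.ne_zero

lemma aux_mulVec_zero {m : ℕ} (A : Matrix (Fin m) (Fin m) ℤ) (hdet : A.det ≠ 0)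
    {v : Fin m → ℤ} (h : A.mulVec v = 0) : v = 0 := by
  have h2 : A.det • v = 0 := by
    have := congrArg A.adjugate.mulVec h
    rwa [Matrix.mulVec_mulVec, Matrix.adjugate_mul, Matrix.smul_mulVec,
      Matrix.one_mulVec, Matrix.mulVec_zero] at this
  funext i
  have := congrFun h2 i
  simp only [Pi.smul_apply, smul_eq_mul, Pi.zero_apply] at this ⊢
  rcases mul_eq_zero.mp this with h | h
  · exact absurd h hdet
  · exact h

lemma aux_key {m : ℕ} (A : Matrix (Fin m) (Fin m) ℤ)
    (heig : ∀ μ ∈ spectrum ℂ (A.map (Int.cast : ℤ → ℂ)), 1 < ‖μ‖)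
    (w : Fin m → ℤ) (hw : ∀ n : ℕ, ∃ v : Fin m → ℤ, w = (A ^ (n + 1)).mulVec v) :
    w = 0 := by
  rcases Nat.eq_zero_or_pos m with hm | hm
  · subst hm; exact funext fun i => i.elim0
  haveI : Nonempty (Fin m) := ⟨⟨0, hm⟩⟩
  set M : Matrix (Fin m) (Fin m) ℂ := A.map (Int.cast : ℤ → ℂ) with hM
  have hu : IsUnit M := by
    by_contra h
    have := heig 0 ((spectrum.zero_mem_iff (R := ℂ)).mpr h)
    norm_num at this
  set u : (Matrix (Fin m) (Fin m) ℂ)ˣ := hu.unit with hudef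
  set B : Matrix (Fin m) (Fin m) ℂ := ↑u⁻¹ with hB
  -- spectral radius of B is < 1
  have hsp : ∀ ν ∈ spectrum ℂ B, ‖ν‖₊ < 1 := by
    intro ν hν
    have hν0 : ν ≠ 0 := by
      rintro rfl
      exact (spectrum.zero_notMem_iff ℂ).mpr u⁻¹.isUnit hν
    have hinv : ν⁻¹ ∈ spectrum ℂ M := by
      have h2 := (spectrum.inv_mem_iff (r := Units.mk0 ν hν0) (a := u⁻¹)).mp hν
      rw [inv_inv] at h2
      rwa [show (((Units.mk0 ν hν0)⁻¹ : ℂˣ) : ℂ) = ν⁻¹ from rfl, hu.unit_spec] at h2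
    have h1 : 1 < ‖ν⁻¹‖ := heig _ hinv
    rw [norm_inv] at h1
    have habs : ‖ν‖ < 1 := by
      have hpos : 0 < ‖ν‖ := norm_pos_iff.mpr hν0
      rw [lt_inv_comm₀ (by norm_num) hpos] at h1
      simpa using h1
    rw [← NNReal.coe_lt_coe]
    simpa using habs
  have hρ : spectralRadius ℂ B < 1 := by
    simpa using spectrum.spectralRadius_lt_of_forall_lt B hsp
  obtain ⟨r, hr1, hr2⟩ := exists_between hρ
  have hG := spectrum.pow_nnnorm_pow_one_div_tendsto_nhds_spectralRadius B
  have hev : ∀ᶠ n : ℕ in atTop, (‖B ^ n‖₊ : ENNReal) ^ (1 / (n : ℝ)) < r :=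
    hG.eventually_lt_const hr1
  set a : ENNReal := (‖fun i => ((w i : ℂ))‖₊ : ENNReal) with ha
  have hC : Tendsto (fun n : ℕ => a * r ^ n) atTop (𝓝 0) := by
    have := ENNReal.Tendsto.const_mul (ENNReal.tendsto_pow_atTop_nhds_zero_of_lt_one hr2)
      (Or.inr (by simp [ha] : a ≠ ⊤))
    simpa using this
  have hC' : ∀ᶠ n : ℕ in atTop, a * r ^ n < 1 :=
    hC.eventually_lt_const (by norm_num)
  obtain ⟨n, ⟨⟨hn1, hn2⟩, hn3⟩⟩ := ((hev.and hC').and (eventually_ge_atTop 1)).exists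
  have hn0 : n ≠ 0 := by omega
  have hBn : (‖B ^ n‖₊ : ENNReal) < r ^ n := by
    have hpos : (0 : ℝ) < n := by positivity
    have h2 := ENNReal.rpow_lt_rpow hn1 hpos
    rwa [ENNReal.rpow_natCast, ENNReal.rpow_natCast, one_div,
      ENNReal.rpow_inv_natCast_pow hn0] at h2
  obtain ⟨v, hv⟩ := hw (n - 1)
  rw [Nat.sub_add_cancel hn3] at hv
  set cv : Fin m → ℂ := fun i => ((v i : ℂ)) with hcv
  set cw : Fin m → ℂ := fun i => ((w i : ℂ)) with hcw
  have hmap : (A ^ n).map ⇑(Int.castRingHom ℂ) = M ^ n := by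
    have h3 := map_pow (Int.castRingHom ℂ).mapMatrix A n
    simpa [RingHom.mapMatrix_apply, hM, Int.coe_castRingHom] using h3
  have hMn : (M ^ n).mulVec cv = cw := by
    funext i
    have h4 := (Int.castRingHom ℂ).map_mulVec (A ^ n) v i
    rw [hmap] at h4
    have h5 : cw i = (((A ^ n).mulVec v i : ℤ) : ℂ) := by rw [hcw, hv]
    rw [h5]
    exact h4.symm
  have hBM : B ^ n * M ^ n = 1 := by
    have h6 : (u⁻¹ ^ n * u ^ n : (Matrix (Fin m) (Fin m) ℂ)ˣ) = 1 := by
      rw [inv_pow, inv_mul_cancel]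
    calc B ^ n * M ^ n = ↑(u⁻¹ ^ n * u ^ n : (Matrix (Fin m) (Fin m) ℂ)ˣ) := by
          rw [Units.val_mul, Units.val_pow_eq_pow_val, Units.val_pow_eq_pow_val, hB, hu.unit_spec]
      _ = 1 := by rw [h6, Units.val_one]
  have hcveq : cv = (B ^ n).mulVec cw := by
    rw [← hMn, Matrix.mulVec_mulVec, hBM, Matrix.one_mulVec]
  have hnorm : (‖cv‖₊ : ENNReal) ≤ (‖B ^ n‖₊ : ENNReal) * a := by
    rw [hcveq, ha, ← ENNReal.coe_mul, ENNReal.coe_le_coe]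
    exact Matrix.linfty_opNNNorm_mulVec (B ^ n) cw
  have hlt : (‖cv‖₊ : ENNReal) < 1 := by
    refine lt_of_le_of_lt (hnorm.trans (mul_le_mul_left hBn.le a)) ?_
    rwa [mul_comm]
  have hv0 : v = 0 := by
    funext i
    by_contra hvi
    have h7 : (1 : ℝ) ≤ ‖cv i‖ := by
      rw [hcv]
      simp only [Complex.norm_intCast]
      exact_mod_cast Int.one_le_abs hvi
    have h8 : ‖cv i‖ ≤ ‖cv‖ := norm_le_pi_norm cv i
    have h9 : ‖cv‖ < 1 := by exact_mod_cast hlt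
    linarith
  rw [hv, hv0, Matrix.mulVec_zero]

end Analytic

lemma isolator_mono {N : Type*} [Group N] {H K : Subgroup N} (h : H ≤ K) :
    isolator H ≤ isolator K :=
  Subgroup.closure_mono (fun x ⟨m, hm, hx⟩ => ⟨m, hm, h hx⟩)

lemma isolator_lcs_zero (N : Type*) [Group N] :
    isolator ((⊤ : Subgroup N).lowerCentralSeries 0) = ⊤ := by
  rw [eq_top_iff]
  intro x _
  exact Subgroup.subset_closure ⟨1, one_pos, by simp⟩

lemma isolator_bot {N : Type*} [Group N] (htf : Monoid.IsTorsionFree N) :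
    isolator (⊥ : Subgroup N) = ⊥ := by
  rw [eq_bot_iff, isolator]
  apply (Subgroup.closure_le _).mpr
  rintro x ⟨m, hm, hxm⟩
  have hx1 : x = 1 := by
    by_contra hx1
    exact htf x hx1 (isOfFinOrder_iff_pow_eq_one.mpr ⟨m, hm, Subgroup.mem_bot.mp hxm⟩)
  simp [hx1]

lemma lcs_map_le {N : Type*} [Group N] (f : N →* N) (n : ℕ) :
    Subgroup.map f ((⊤ : Subgroup N).lowerCentralSeries n) ≤
      (⊤ : Subgroup N).lowerCentralSeries n := by
  rw [Subgroup.map_lowerCentralSeries]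
  induction n with
  | zero => exact le_top
  | succ d hd =>
    rw [Subgroup.lowerCentralSeries_succ, Subgroup.lowerCentralSeries_succ]
    exact Subgroup.commutator_mono hd le_top

lemma isolator_map {N : Type*} [Group N] (φ : Monoid.End N) (i : ℕ) {x : N}
    (hx : x ∈ isolator ((⊤ : Subgroup N).lowerCentralSeries i)) :
    φ x ∈ isolator ((⊤ : Subgroup N).lowerCentralSeries i) := by
  have h : Subgroup.map (φ : N →* N) (isolator ((⊤ : Subgroup N).lowerCentralSeries i)) ≤
      isolator ((⊤ : Subgroup N).lowerCentralSeries i) := by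
    rw [isolator]
    refine (MonoidHom.map_closure (φ : N →* N) _).le.trans ?_
    apply (Subgroup.closure_le _).mpr
    rintro y ⟨z, ⟨k, hk, hzk⟩, rfl⟩
    exact Subgroup.subset_closure ⟨k, hk, by
      have := lcs_map_le (φ : N →* N) i ⟨z ^ k, hzk, rfl⟩
      exact Eq.mp (congrArg (fun t => t ∈ (⊤ : Subgroup N).lowerCentralSeries i)
        (MonoidHom.map_pow (φ : N →* N) z k)) this⟩
  exact h ⟨x, hx, rfl⟩

lemma aux_iter {N : Type*} [Group N] (φ : Monoid.End N) (j : ℕ) {m : ℕ}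
    (π : ↥(isolator ((⊤ : Subgroup N).lowerCentralSeries j)) →* Multiplicative (Fin m → ℤ))
    (A : Matrix (Fin m) (Fin m) ℤ)
    (hcompat : ∀ (x : ↥(isolator ((⊤ : Subgroup N).lowerCentralSeries j)))
        (hx : φ (x : N) ∈ isolator ((⊤ : Subgroup N).lowerCentralSeries j)),
        Multiplicative.toAdd (π ⟨φ (x : N), hx⟩) = A.mulVec (Multiplicative.toAdd (π x)))
    (k : ℕ) (z : N) (hz : z ∈ isolator ((⊤ : Subgroup N).lowerCentralSeries j)) :
    ∃ h : (φ ^ k) z ∈ isolator ((⊤ : Subgroup N).lowerCentralSeries j),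
      Multiplicative.toAdd (π ⟨(φ ^ k) z, h⟩) =
        (A ^ k).mulVec (Multiplicative.toAdd (π ⟨z, hz⟩)) := by
  induction k with
  | zero =>
    have h0 : (φ ^ 0) z = z := by simp
    refine ⟨h0.symm ▸ hz, ?_⟩
    have h1 : (⟨(φ ^ 0) z, h0.symm ▸ hz⟩ : ↥(isolator ((⊤ : Subgroup N).lowerCentralSeries j))) = ⟨z, hz⟩ :=
      Subtype.ext h0
    rw [h1, pow_zero, Matrix.one_mulVec]
  | succ k ih =>
    obtain ⟨h, heq⟩ := ih
    have h2 : (φ ^ (k + 1)) z = φ ((φ ^ k) z) := by rw [pow_succ']; rfl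
    have hmem : φ ((φ ^ k) z) ∈ isolator ((⊤ : Subgroup N).lowerCentralSeries j) := isolator_map φ j h
    refine ⟨h2.symm ▸ hmem, ?_⟩
    have h3 : (⟨(φ ^ (k + 1)) z, h2.symm ▸ hmem⟩ : ↥(isolator ((⊤ : Subgroup N).lowerCentralSeries j))) =
        ⟨φ ((φ ^ k) z), hmem⟩ := Subtype.ext h2
    rw [h3, hcompat ⟨(φ ^ k) z, h⟩ hmem, heq, Matrix.mulVec_mulVec, ← pow_succ']

theorem stmt14 {N : Type*} [Group N] [Group.FG N] [Group.IsNilpotent N]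
    (htf : Monoid.IsTorsionFree N)
    (φ : Monoid.End N) (hinj : Function.Injective φ)
    (hexp : ∀ i : ℕ, ∃ (m : ℕ)
      (π : ↥(isolator ((⊤ : Subgroup N).lowerCentralSeries i)) →* Multiplicative (Fin m → ℤ))
      (A : Matrix (Fin m) (Fin m) ℤ),
      Function.Surjective π ∧
      (∀ x : ↥(isolator ((⊤ : Subgroup N).lowerCentralSeries i)),
        π x = 1 ↔ (x : N) ∈ isolator ((⊤ : Subgroup N).lowerCentralSeries (i + 1))) ∧
      (∀ μ ∈ spectrum ℂ (A.map (Int.cast : ℤ → ℂ)), 1 < ‖μ‖) ∧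
      (∀ (x : ↥(isolator ((⊤ : Subgroup N).lowerCentralSeries i)))
        (hx : φ (x : N) ∈ isolator ((⊤ : Subgroup N).lowerCentralSeries i)),
        Multiplicative.toAdd (π ⟨φ (x : N), hx⟩) =
          A.mulVec (Multiplicative.toAdd (π x)))) :
    (⨅ n : ℕ, MonoidHom.range ((φ ^ (n + 1) : Monoid.End N) : N →* N)) = ⊥ := by
  classical
  obtain ⟨c, hc⟩ := Subgroup.nilpotent_iff_lowerCentralSeries.mp (inferInstance : Group.IsNilpotent N)
  have hlevel : ∀ z : N, z ≠ 1 → ∃ i, z ∈ isolator ((⊤ : Subgroup N).lowerCentralSeries i) ∧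
      z ∉ isolator ((⊤ : Subgroup N).lowerCentralSeries (i + 1)) := by
    intro z hz
    have hex : ∃ n, z ∉ isolator ((⊤ : Subgroup N).lowerCentralSeries n) :=
      ⟨c, by rw [hc, isolator_bot htf]; simpa using hz⟩
    have hk0 : Nat.find hex ≠ 0 := by
      intro h
      have h2 := Nat.find_spec hex
      rw [h, isolator_lcs_zero] at h2
      exact h2 (Subgroup.mem_top z)
    refine ⟨Nat.find hex - 1, ?_, ?_⟩
    · have h3 := Nat.find_min hex (m := Nat.find hex - 1) (by omega)
      exact not_not.mp h3
    · have h4 := Nat.find_spec hex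
      rwa [Nat.sub_add_cancel (by omega)]
  rw [eq_bot_iff]
  intro x hx
  rw [Subgroup.mem_iInf] at hx
  rw [Subgroup.mem_bot]
  by_contra hx1
  obtain ⟨i, hxi, hxi1⟩ := hlevel x hx1
  obtain ⟨m, π, A, hsurj, hker, heig, hcompat⟩ := hexp i
  set w := Multiplicative.toAdd (π ⟨x, hxi⟩) with hwdef
  have hw0 : w ≠ 0 := fun h => hxi1 ((hker ⟨x, hxi⟩).mp (toAdd_eq_zero.mp h))
  have hdetA : ∀ {m' : ℕ} (A' : Matrix (Fin m') (Fin m') ℤ),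
      (∀ μ ∈ spectrum ℂ (A'.map (Int.cast : ℤ → ℂ)), 1 < ‖μ‖) →
      ∀ (k : ℕ) (v : Fin m' → ℤ), (A' ^ k).mulVec v = 0 → v = 0 := by
    intro m' A' hA' k v hv
    exact aux_mulVec_zero _
      (by rw [Matrix.det_pow]; exact pow_ne_zero _ (aux_det_ne_zero A' hA')) hv
  have hmem_y : ∀ n : ℕ, ∃ y : N, (φ ^ (n + 1)) y = x ∧
      y ∈ isolator ((⊤ : Subgroup N).lowerCentralSeries i) := by
    intro n
    obtain ⟨y, hy⟩ := hx n
    refine ⟨y, hy, ?_⟩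
    by_contra hyi
    have hy1 : y ≠ 1 := by
      rintro rfl
      apply hx1
      rw [← hy]
      exact map_one _
    obtain ⟨j, hyj, hyj1⟩ := hlevel y hy1
    have hji : j + 1 ≤ i := by
      by_contra hji'
      exact hyi (isolator_mono ((⊤ : Subgroup N).lowerCentralSeries_antitone (by omega : i ≤ j)) hyj)
    obtain ⟨m', π', A', hsurj', hker', heig', hcompat'⟩ := hexp j
    obtain ⟨hmem, heq⟩ := aux_iter φ j π' A' hcompat' (n + 1) y hyj
    have hxj : x ∈ isolator ((⊤ : Subgroup N).lowerCentralSeries j) := hy ▸ hmem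
    have hxj1 : x ∈ isolator ((⊤ : Subgroup N).lowerCentralSeries (j + 1)) :=
      isolator_mono ((⊤ : Subgroup N).lowerCentralSeries_antitone hji) hxi
    have h0 : Multiplicative.toAdd (π' ⟨x, hxj⟩) = 0 :=
      toAdd_eq_zero.mpr ((hker' ⟨x, hxj⟩).mpr hxj1)
    have h6 : (A' ^ (n + 1)).mulVec (Multiplicative.toAdd (π' ⟨y, hyj⟩)) = 0 := by
      rw [← heq]
      have h5 : (⟨(φ ^ (n + 1)) y, hmem⟩ : ↥(isolator ((⊤ : Subgroup N).lowerCentralSeries j))) = ⟨x, hxj⟩ :=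
        Subtype.ext hy
      rw [h5, h0]
    exact hyj1 ((hker' ⟨y, hyj⟩).mp (toAdd_eq_zero.mp (hdetA A' heig' (n + 1) _ h6)))
  have hwA : ∀ n : ℕ, ∃ v : Fin m → ℤ, w = (A ^ (n + 1)).mulVec v := by
    intro n
    obtain ⟨y, hy, hyi⟩ := hmem_y n
    obtain ⟨hmem, heq⟩ := aux_iter φ i π A hcompat (n + 1) y hyi
    refine ⟨Multiplicative.toAdd (π ⟨y, hyi⟩), ?_⟩
    rw [hwdef]
    have h4 : (⟨x, hxi⟩ : ↥(isolator ((⊤ : Subgroup N).lowerCentralSeries i))) = ⟨(φ ^ (n + 1)) y, hmem⟩ :=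
      Subtype.ext hy.symm
    rw [h4, heq]
  exact hw0 (aux_key A heig w hwA)
end

section
/- Let N^ℚ be a torsion-free radicable nilpotent group, F a finite group, ρ: F → Aut(N^ℚ) a homomorphism, and G = N^ℚ ⋊_ρ F the semidirect product. Let N ≤ N^ℚ be a full subgroup, i.e., for every x ∈ N^ℚ there exists m > 0 with xᵐ ∈ N. Then the centralizer of N in G equals {(x, f) : x ∈ Z(N^ℚ), f ∈ ker(ρ)}, provided that every automorphism of N^ℚ of finite order inducing the identity on N^ℚ/[N^ℚ,N^ℚ] is trivial. -/
open scoped commutatorElement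

/-- Isolation of the upper central series in a torsion-free group:
if `x ∈ ζ_{k+1}` and `x^n ∈ ζ_k` for some `n > 0`, then `x ∈ ζ_k`. -/
lemma upper_isolated {G : Type*} [Group G] (htf : Monoid.IsTorsionFree G) :
    ∀ (k : ℕ) (x : G) (n : ℕ), 0 < n → x ∈ Subgroup.upperCentralSeries G (k + 1) →
      x ^ n ∈ Subgroup.upperCentralSeries G k → x ∈ Subgroup.upperCentralSeries G k := by
  intro k
  induction k with
  | zero =>
    intro x n hn _ hxn
    rw [Subgroup.upperCentralSeries_zero, Subgroup.mem_bot] at hxn ⊢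
    by_contra hx1
    exact htf x hx1 (isOfFinOrder_iff_pow_eq_one.mpr ⟨n, hn, hxn⟩)
  | succ k ih =>
    intro x n hn hx hxn
    rw [Subgroup.mem_upperCentralSeries_succ_iff]
    intro y
    set U := Subgroup.upperCentralSeries G k with hU
    set w := x * y * x⁻¹ * y⁻¹ with hw
    have hwmem : w ∈ Subgroup.upperCentralSeries G (k + 1) :=
      (Subgroup.mem_upperCentralSeries_succ_iff.mp hx) y
    have claim : ∀ j : ℕ, (x ^ j * y * (x ^ j)⁻¹ * y⁻¹) * (w ^ j)⁻¹ ∈ U := by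
      intro j
      induction j with
      | zero =>
        simpa using U.one_mem
      | succ j hj =>
        have h1 := (Subgroup.mem_upperCentralSeries_succ_iff.mp hwmem) (x ^ j)
        have hc : x ^ j * w * (x ^ j)⁻¹ * w⁻¹ ∈ U := by
          have heq : x ^ j * w * (x ^ j)⁻¹ * w⁻¹ = (w * x ^ j * w⁻¹ * (x ^ j)⁻¹)⁻¹ := by
            group
          rw [heq]
          exact U.inv_mem h1
        have key : (x ^ (j+1) * y * (x ^ (j+1))⁻¹ * y⁻¹) * (w ^ (j+1))⁻¹
            = (x ^ j * w * (x ^ j)⁻¹ * w⁻¹) *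
              (w * ((x ^ j * y * (x ^ j)⁻¹ * y⁻¹) * (w ^ j)⁻¹) * w⁻¹) := by
          rw [pow_succ x j, pow_succ' w j]
          generalize x ^ j = X
          generalize w ^ j = W
          rw [hw]
          group
        rw [key]
        exact U.mul_mem hc ((inferInstance : (Subgroup.upperCentralSeries G k).Normal).conj_mem _ hj w)
    have hA : (x ^ n * y * (x ^ n)⁻¹ * y⁻¹) ∈ U :=
      (Subgroup.mem_upperCentralSeries_succ_iff.mp hxn) y
    have hwn : w ^ n ∈ U := by
      have h4 := U.mul_mem (U.inv_mem hA) (claim n)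
      rw [inv_mul_cancel_left] at h4
      simpa using U.inv_mem h4
    exact ih w n hn hwmem hwn

/-- In a torsion-free nilpotent group the quotient by the center is torsion-free. -/
lemma quotient_center_torsionFree {G : Type*} [Group G] [Group.IsNilpotent G]
    (htf : Monoid.IsTorsionFree G) :
    Monoid.IsTorsionFree (G ⧸ Subgroup.center G) := by
  intro g hg hfin
  obtain ⟨x, rfl⟩ := QuotientGroup.mk_surjective g
  obtain ⟨n, hn, hxn⟩ := isOfFinOrder_iff_pow_eq_one.mp hfin
  have hxc : x ^ n ∈ Subgroup.center G := by
    rw [← QuotientGroup.eq_one_iff]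
    rw [← QuotientGroup.mk_pow] at hxn
    exact hxn
  obtain ⟨c, hc⟩ := Group.IsNilpotent.nilpotent (G := G)
  have key : ∀ j : ℕ, x ∈ Subgroup.upperCentralSeries G (j + 1) →
      x ∈ Subgroup.upperCentralSeries G 1 := by
    intro j
    induction j with
    | zero => exact id
    | succ j ihj =>
      intro hx
      apply ihj
      apply upper_isolated htf (j + 1) x n hn hx
      have hle : Subgroup.upperCentralSeries G 1 ≤ Subgroup.upperCentralSeries G (j + 1) :=
        Subgroup.upperCentralSeries_mono G (by omega)
      apply hle
      rw [Subgroup.upperCentralSeries_one]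
      exact hxc
  have hx1 : x ∈ Subgroup.upperCentralSeries G 1 := by
    apply key c
    have hle : Subgroup.upperCentralSeries G c ≤ Subgroup.upperCentralSeries G (c + 1) :=
      Subgroup.upperCentralSeries_mono G (by omega)
    exact hle (hc ▸ Subgroup.mem_top x)
  rw [Subgroup.upperCentralSeries_one] at hx1
  exact hg ((QuotientGroup.eq_one_iff x).mpr hx1)

/-- The statement of unique roots, as a predicate for the induction principle. -/
def PowInjProp (G : Type*) [Group G] [Group.IsNilpotent G] : Prop :=
  Monoid.IsTorsionFree G → ∀ (n : ℕ), 0 < n → ∀ a b : G, a ^ n = b ^ n → a = b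

/-- Mal'cev: in a torsion-free nilpotent group, taking `n`-th powers is injective. -/
lemma pow_inj_of_torsionFree (G : Type*) [Group G] [Group.IsNilpotent G] :
    Monoid.IsTorsionFree G → ∀ (n : ℕ), 0 < n → ∀ a b : G, a ^ n = b ^ n → a = b := by
  show PowInjProp G
  refine nilpotent_center_quotient_ind (P := fun G _ _ => PowInjProp G) G ?_ ?_
  · intro G _ _
    intro _ _ _ a b _
    exact Subsingleton.elim a b
  · intro G _ _ ih
    intro htf n hn a b h
    have hq : (QuotientGroup.mk a : G ⧸ Subgroup.center G) = QuotientGroup.mk b := by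
      apply ih (quotient_center_torsionFree htf) n hn
      rw [← QuotientGroup.mk_pow, ← QuotientGroup.mk_pow, h]
    have hz : a⁻¹ * b ∈ Subgroup.center G := (QuotientGroup.eq).mp hq
    set z := a⁻¹ * b with hzdef
    have hb : b = a * z := by rw [hzdef]; group
    have hcomm : Commute a z := (Subgroup.mem_center_iff.mp hz) a
    have hzn : z ^ n = 1 := by
      have hbn : b ^ n = a ^ n * z ^ n := by rw [hb, hcomm.mul_pow]
      rw [← h] at hbn
      exact mul_eq_left.mp hbn.symm
    have hz1 : z = 1 := by
      by_contra hne
      exact htf z hne (isOfFinOrder_iff_pow_eq_one.mpr ⟨n, hn, hzn⟩)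
    rw [hb, hz1, mul_one]

theorem stmt15 {NQ F : Type*} [Group NQ] [Group F] [Finite F]
    [Group.IsNilpotent NQ] (htf : Monoid.IsTorsionFree NQ) (hrad : Radicable NQ)
    (ρ : F →* MulAut NQ)
    (N : Subgroup NQ) (hfull : ∀ x : NQ, ∃ m : ℕ, 0 < m ∧ x ^ m ∈ N)
    (hfin : ∀ ψ : MulAut NQ, IsOfFinOrder ψ →
      (∀ x : NQ, ψ x * x⁻¹ ∈ commutator NQ) → ψ = 1) :
    ∀ g : NQ ⋊[ρ] F,
      g ∈ Subgroup.centralizer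
        ((N.map (SemidirectProduct.inl : NQ →* NQ ⋊[ρ] F)) : Set (NQ ⋊[ρ] F)) ↔
      (g.left ∈ Subgroup.center NQ ∧ g.right ∈ ρ.ker) := by
  have hinj : ∀ (m : ℕ), 0 < m → ∀ a b : NQ, a ^ m = b ^ m → a = b :=
    pow_inj_of_torsionFree NQ htf
  intro g
  obtain ⟨x, f⟩ := g
  constructor
  · intro hmem
    -- conjugation relation on N
    have hconj : ∀ y : NQ, y ∈ N → ρ f y = x⁻¹ * y * x := by
      intro y hy
      have hyS : (SemidirectProduct.inl y : NQ ⋊[ρ] F) ∈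
          ((N.map (SemidirectProduct.inl : NQ →* NQ ⋊[ρ] F)) : Set (NQ ⋊[ρ] F)) :=
        ⟨y, hy, rfl⟩
      have heq := Subgroup.mem_centralizer_iff.mp hmem _ hyS
      have hleft := congrArg SemidirectProduct.left heq
      simp only [SemidirectProduct.mul_left, SemidirectProduct.left_inl,
        SemidirectProduct.right_inl, map_one, MulAut.one_apply] at hleft
      -- hleft : y * x = x * ρ f y
      have h2 : (ρ f) y = x⁻¹ * (y * x) := by rw [hleft, inv_mul_cancel_left]
      rw [h2, mul_assoc]
    -- extend to all of NQ by uniqueness of roots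
    have hconj_all : ∀ y : NQ, ρ f y = x⁻¹ * y * x := by
      intro y
      obtain ⟨m, hm, hym⟩ := hfull y
      apply hinj m hm
      have h1 : (ρ f y) ^ m = ρ f (y ^ m) := (map_pow _ _ _).symm
      have h2 : (x⁻¹ * y * x) ^ m = x⁻¹ * y ^ m * x := by
        have := conj_pow (a := x⁻¹) (b := y) (i := m)
        simpa using this
      rw [h1, h2, hconj _ hym]
    -- the automorphism ρ f has finite order and acts trivially on the abelianization
    have hford : IsOfFinOrder (ρ f) := by
      apply MonoidHom.isOfFinOrder
      exact isOfFinOrder_iff_pow_eq_one.mpr ⟨orderOf f, orderOf_pos f, pow_orderOf_eq_one f⟩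
    have hcommcond : ∀ z : NQ, (ρ f) z * z⁻¹ ∈ commutator NQ := by
      intro z
      have : (ρ f) z * z⁻¹ = ⁅x⁻¹, z⁆ := by
        rw [hconj_all z]
        group
      rw [this, commutator_def]
      exact Subgroup.commutator_mem_commutator (Subgroup.mem_top _) (Subgroup.mem_top _)
    have hψ : ρ f = 1 := hfin (ρ f) hford hcommcond
    refine ⟨Subgroup.mem_center_iff.mpr fun y => ?_, MonoidHom.mem_ker.mpr hψ⟩
    have hthis := hconj_all y
    rw [hψ] at hthis
    simp only [MulAut.one_apply] at hthis
    -- hthis : y = x⁻¹ * y * x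
    have h3 : x * y = y * x := by
      calc x * y = x * (x⁻¹ * y * x) := by rw [← hthis]
      _ = y * x := by group
    exact h3.symm
  · rintro ⟨hx, hf⟩
    rw [Subgroup.mem_centralizer_iff]
    rintro h ⟨y, hy, rfl⟩
    have hρ : ρ f = 1 := MonoidHom.mem_ker.mp hf
    ext
    · simp only [SemidirectProduct.mul_left, SemidirectProduct.left_inl,
        SemidirectProduct.right_inl, map_one, MulAut.one_apply, hρ]
      exact Subgroup.mem_center_iff.mp hx y
    · simp [SemidirectProduct.mul_right]
end

section
/- Let Γ be a group, N ◁ Γ a normal subgroup invariant under an endomorphism φ: Γ → Γ, with quotient G = Γ/N finite. If the Reidemeister number R(φ) is finite, then the Reidemeister number R(φ_N) of the restriction of φ to N is also finite. -/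
/-- The Reidemeister number of `φ` is finite: the quotient of the group by the
`φ`-conjugacy (twisted conjugacy) relation `x ~ y ↔ ∃ z, x = z * y * (φ z)⁻¹` is finite. -/
def ReidemeisterFinite {G : Type*} [Group G] (φ : G →* G) : Prop :=
  Finite (Quot (fun x y : G => ∃ z : G, x = z * y * (φ z)⁻¹))

lemma twistedConj_equiv {G : Type*} [Group G] (φ : G →* G) :
    Equivalence (fun x y : G => ∃ z : G, x = z * y * (φ z)⁻¹) := by
  constructor
  · intro x; exact ⟨1, by simp⟩
  · rintro x y ⟨z, rfl⟩
    exact ⟨z⁻¹, by simp [mul_assoc]⟩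
  · rintro x y w ⟨z, rfl⟩ ⟨u, rfl⟩
    exact ⟨z * u, by simp [mul_assoc]⟩

theorem stmt16 {Γ : Type*} [Group Γ] (N : Subgroup Γ) [N.Normal]
    (φ : Monoid.End Γ) (hNinv : ∀ x ∈ N, φ x ∈ N)
    (hfin : Finite (Γ ⧸ N))
    (ψ : Monoid.End ↥N) (hres : ∀ x : ↥N, (ψ x : Γ) = φ (x : Γ))
    (h : ReidemeisterFinite (φ : Γ →* Γ)) :
    ReidemeisterFinite (ψ : ↥N →* ↥N) := by
  classical
  set rψ := fun x y : ↥N => ∃ z : ↥N, x = z * y * (ψ z)⁻¹ with hrψ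
  set rφ := fun x y : Γ => ∃ z : Γ, x = z * y * (φ z)⁻¹ with hrφ
  have eψ : Equivalence rψ := twistedConj_equiv (ψ : ↥N →* ↥N)
  have eφ : Equivalence rφ := twistedConj_equiv (φ : Γ →* Γ)
  -- the induced map on quotients
  have Fsound : ∀ x y : ↥N, rψ x y → Quot.mk rφ (x : Γ) = Quot.mk rφ (y : Γ) := by
    rintro x y ⟨z, rfl⟩
    apply Quot.sound
    refine ⟨(z : Γ), ?_⟩
    push_cast
    rw [hres]
  let F : Quot rψ → Quot rφ := Quot.lift (fun x : ↥N => Quot.mk rφ (x : Γ)) Fsound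
  have hFin : Finite (Quot rφ) := h
  -- each fiber of F is finite
  have hfiber : ∀ q : Quot rφ, Finite {a : Quot rψ // F a = q} := by
    intro q
    by_cases hne : Nonempty {a : Quot rψ // F a = q}
    · obtain ⟨a₀, ha₀⟩ := hne
      obtain ⟨x₀, rfl⟩ := Quot.exists_rep a₀
      -- a surjection-ish map from Γ ⧸ N covering the fiber
      let g : Γ ⧸ N → Quot rψ := fun c =>
        if hc : (c.out⁻¹ * (x₀ : Γ) * (φ c.out⁻¹)⁻¹) ∈ N then Quot.mk rψ ⟨_, hc⟩
        else Quot.mk rψ x₀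
      have hsub : {a : Quot rψ | F a = q} ⊆ Set.range g := by
        rintro a ha
        obtain ⟨y, rfl⟩ := Quot.exists_rep a
        have hq : Quot.mk rφ (y : Γ) = Quot.mk rφ (x₀ : Γ) := by
          have : F (Quot.mk rψ y) = F (Quot.mk rψ x₀) := ha.trans ha₀.symm
          exact this
        rw [Quot.eq, eφ.eqvGen_iff] at hq
        obtain ⟨z, hz⟩ := hq
        refine ⟨((z⁻¹ : Γ) : Γ ⧸ N), ?_⟩
        set c : Γ ⧸ N := ((z⁻¹ : Γ) : Γ ⧸ N) with hcdef
        have hcout : ((c.out : Γ) : Γ ⧸ N) = ((z⁻¹ : Γ) : Γ ⧸ N) := by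
          simp [hcdef]
        have hn : z * c.out ∈ N := by
          rw [eq_comm, QuotientGroup.eq] at hcout
          simpa using hcout
        set n : Γ := z * c.out with hndef
        have hcoutz : c.out = z⁻¹ * n := by rw [hndef]; group
        have key : c.out⁻¹ * (x₀ : Γ) * (φ c.out⁻¹)⁻¹ = n⁻¹ * (y : Γ) * φ n := by
          rw [hcoutz, hz]
          simp [mul_assoc]
        have hmem : (c.out⁻¹ * (x₀ : Γ) * (φ c.out⁻¹)⁻¹) ∈ N := by
          rw [key]
          exact mul_mem (mul_mem (inv_mem hn) y.2) (hNinv _ hn)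
        show g c = Quot.mk rψ y
        rw [show g c = Quot.mk rψ ⟨_, hmem⟩ from dif_pos hmem]
        apply Quot.sound
        refine ⟨⟨n⁻¹, inv_mem hn⟩, ?_⟩
        apply Subtype.ext
        push_cast
        rw [hres]
        push_cast
        rw [key]
        simp
      have : Set.Finite {a : Quot rψ | F a = q} :=
        Set.Finite.subset (Set.finite_range g) hsub
      exact this
    · exact @Finite.of_fintype _ (@Fintype.ofIsEmpty _ (not_nonempty_iff.mp hne))
  have : Finite (Σ q : Quot rφ, {a : Quot rψ // F a = q}) := by
    have := hfiber
    exact Finite.instSigma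
  exact Finite.of_equiv _ (Equiv.sigmaFiberEquiv F)
end
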